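/- Assume κ ≤ π_noise(ε) ≤ κ⁻¹ for all ε ∈ ℝ^J, where κ ∈ (0,1). Then for all finite Borel measures μ, ν on ℝⁿ, d(Pμ, Pν) ≤ κ⁻¹ d(μ, ν), where d(μ,ν) = sup{|∫φ dμ − ∫φ dν| : φ : ℝⁿ → ℝ bounded measurable with sup|φ| ≤ 1}. (The proof exhibits, for each such φ, a bounded measurable ψ with sup|ψ| ≤ κ⁻¹ such that (Pμ)(φ) = μ(ψ) for every finite measure μ.) -/

import Mathlib

open MeasureTheory

/-- The map `P` of the iterative model-error algorithm:
`(Pμ)(du) = (∫ π_noise(b − f(u) − M(z)) μ(dz)) · π_prior(u) du`. -/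
noncomputable def Pmeas {n J : ℕ}
    (πprior : (Fin n → ℝ) → ℝ) (πnoise : (Fin J → ℝ) → ℝ)
    (f M : (Fin n → ℝ) → (Fin J → ℝ)) (b : Fin J → ℝ)
    (μ : Measure (Fin n → ℝ)) : Measure (Fin n → ℝ) :=
  (volume : Measure (Fin n → ℝ)).withDensity
    (fun u => ENNReal.ofReal ((∫ z, πnoise (b - f u - M z) ∂μ) * πprior u))

/-- The distance `d(μ,ν) = sup {|μ(φ) − ν(φ)| : φ bounded measurable, sup|φ| ≤ 1}`. -/
noncomputable def dmeas {α : Type*} [MeasurableSpace α] (μ ν : Measure α) : ℝ :=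
  sSup {r : ℝ | ∃ φ : α → ℝ, Measurable φ ∧ (∀ x, |φ x| ≤ 1) ∧
    r = |(∫ x, φ x ∂μ) - ∫ x, φ x ∂ν|}

section aux

variable {α β : Type*} [MeasurableSpace α] [MeasurableSpace β]

lemma integrable_of_bdd {μ : Measure α} [IsFiniteMeasure μ] {φ : α → ℝ} {C : ℝ}
    (hm : Measurable φ) (hb : ∀ x, |φ x| ≤ C) : Integrable φ μ :=
  ⟨hm.aestronglyMeasurable, HasFiniteIntegral.of_bounded (C := C)
    (ae_of_all _ fun x => by simpa using hb x)⟩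

lemma integrable_fst_aux (μ : Measure α) [SFinite μ] (ν : Measure β) [IsFiniteMeasure ν]
    {g : α → ℝ} (hg : Integrable g μ) (hm : Measurable g) :
    Integrable (fun p : α × β => g p.1) (μ.prod ν) := by
  have hm' : Measurable fun p : α × β => g p.1 := hm.comp measurable_fst
  refine ⟨hm'.aestronglyMeasurable, ?_⟩
  rw [HasFiniteIntegral, lintegral_prod _ hm'.enorm.aemeasurable]
  simp only [lintegral_const]
  rw [lintegral_mul_const _ hm.enorm]
  exact ENNReal.mul_lt_top hg.2 (measure_lt_top ν Set.univ)

end aux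

section key

variable {n J : ℕ} {κ : ℝ}

lemma Pmeas_integral (hκ0 : 0 < κ)
    (πprior : (Fin n → ℝ) → ℝ) (hprior_meas : Measurable πprior)
    (hprior_nonneg : ∀ u, 0 ≤ πprior u)
    (hprior_int : ∫⁻ u, ENNReal.ofReal (πprior u) = 1)
    (πnoise : (Fin J → ℝ) → ℝ) (hnoise_meas : Measurable πnoise)
    (hnoise_bnd : ∀ ε, κ ≤ πnoise ε ∧ πnoise ε ≤ κ⁻¹)
    (f M : (Fin n → ℝ) → (Fin J → ℝ)) (hf : Measurable f) (hM : Measurable M)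
    (b : Fin J → ℝ)
    (μ : Measure (Fin n → ℝ)) [IsFiniteMeasure μ]
    (φ : (Fin n → ℝ) → ℝ) (hφm : Measurable φ) (hφb : ∀ x, |φ x| ≤ 1) :
    ∫ x, φ x ∂(Pmeas πprior πnoise f M b μ)
      = ∫ z, (∫ u, φ u * (πnoise (b - f u - M z) * πprior u)) ∂μ := by
  have hκinv : (0:ℝ) < κ⁻¹ := inv_pos.2 hκ0
  have hg0 : ∀ ε, 0 ≤ πnoise ε := fun ε => le_trans hκ0.le (hnoise_bnd ε).1
  -- measurability of the kernel on the product
  have hGmeas : Measurable (fun p : ((Fin n → ℝ) × (Fin n → ℝ)) =>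
      πnoise (b - f p.1 - M p.2)) :=
    hnoise_meas.comp (((measurable_const.sub (hf.comp measurable_fst)).sub
      (hM.comp measurable_snd)))
  -- measurability of `u ↦ ∫ z, πnoise (...) ∂μ`
  have hImeas : Measurable (fun u => ∫ z, πnoise (b - f u - M z) ∂μ) :=
    (hGmeas.stronglyMeasurable.integral_prod_right').measurable
  set h : (Fin n → ℝ) → ℝ :=
    fun u => (∫ z, πnoise (b - f u - M z) ∂μ) * πprior u with hh
  have hhm : Measurable h := hImeas.mul hprior_meas
  have hhnn : ∀ u, 0 ≤ h u := fun u =>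
    mul_nonneg (integral_nonneg fun z => hg0 _) (hprior_nonneg u)
  -- integrability of πprior
  have hprior_integrable : Integrable πprior (volume : Measure (Fin n → ℝ)) := by
    refine ⟨hprior_meas.aestronglyMeasurable, ?_⟩
    rw [hasFiniteIntegral_iff_ofReal (ae_of_all _ hprior_nonneg), hprior_int]
    exact ENNReal.one_lt_top
  -- step 1 : withDensity integral
  have step1 : ∫ x, φ x ∂(Pmeas πprior πnoise f M b μ) = ∫ u, h u * φ u := by
    have : Pmeas πprior πnoise f M b μ
        = (volume : Measure (Fin n → ℝ)).withDensity
            (fun u => ((h u).toNNReal : ENNReal)) := rfl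
    rw [this, integral_withDensity_eq_integral_smul hhm.real_toNNReal φ]
    refine integral_congr_ae (ae_of_all _ fun u => ?_)
    simp [NNReal.smul_def, Real.coe_toNNReal _ (hhnn u)]
  rw [step1]
  -- step 2 : rewrite pointwise as an integral over μ
  have step2 : ∀ u, h u * φ u
      = ∫ z, φ u * (πnoise (b - f u - M z) * πprior u) ∂μ := by
    intro u
    rw [integral_const_mul]
    rw [show (fun z => πnoise (b - f u - M z) * πprior u)
        = fun z => πnoise (b - f u - M z) * πprior u from rfl, integral_mul_const]
    ring
  simp_rw [step2]
  -- step 3 : Fubini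
  have hFmeas : Measurable (Function.uncurry fun u z =>
      φ u * (πnoise (b - f u - M z) * πprior u)) := by
    exact (hφm.comp measurable_fst).mul (hGmeas.mul (hprior_meas.comp measurable_fst))
  have hdom : Integrable (fun p : ((Fin n → ℝ) × (Fin n → ℝ)) => κ⁻¹ * πprior p.1)
      ((volume : Measure (Fin n → ℝ)).prod μ) :=
    (integrable_fst_aux _ μ hprior_integrable hprior_meas).const_mul _
  have hFint : Integrable (Function.uncurry fun u z =>
      φ u * (πnoise (b - f u - M z) * πprior u))
      ((volume : Measure (Fin n → ℝ)).prod μ) := by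
    refine hdom.mono' hFmeas.aestronglyMeasurable (ae_of_all _ fun p => ?_)
    have h1 : |φ p.1| ≤ 1 := hφb _
    have h2 : 0 ≤ πnoise (b - f p.1 - M p.2) := hg0 _
    have h3 : πnoise (b - f p.1 - M p.2) ≤ κ⁻¹ := (hnoise_bnd _).2
    have h4 : 0 ≤ πprior p.1 := hprior_nonneg _
    simp only [Function.uncurry, Real.norm_eq_abs]
    rw [abs_mul]
    calc |φ p.1| * |πnoise (b - f p.1 - M p.2) * πprior p.1|
        ≤ 1 * |πnoise (b - f p.1 - M p.2) * πprior p.1| := by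
          exact mul_le_mul_of_nonneg_right h1 (abs_nonneg _)
      _ = πnoise (b - f p.1 - M p.2) * πprior p.1 := by
          rw [one_mul, abs_of_nonneg (mul_nonneg h2 h4)]
      _ ≤ κ⁻¹ * πprior p.1 := mul_le_mul_of_nonneg_right h3 h4
  exact integral_integral_swap hFint

end key

/-- If `κ ≤ π_noise(ε) ≤ κ⁻¹` for all `ε`, with `κ ∈ (0,1)`, then for all finite Borel measures
`μ, ν` on `ℝⁿ`, `d(Pμ, Pν) ≤ κ⁻¹ d(μ, ν)`. -/
theorem stmt_15 {n J : ℕ} (κ : ℝ) (hκ0 : 0 < κ) (hκ1 : κ < 1)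
    (πprior : (Fin n → ℝ) → ℝ) (hprior_meas : Measurable πprior)
    (hprior_nonneg : ∀ u, 0 ≤ πprior u)
    (hprior_int : ∫⁻ u, ENNReal.ofReal (πprior u) = 1)
    (πnoise : (Fin J → ℝ) → ℝ) (hnoise_meas : Measurable πnoise)
    (hnoise_bnd : ∀ ε, κ ≤ πnoise ε ∧ πnoise ε ≤ κ⁻¹)
    (f M : (Fin n → ℝ) → (Fin J → ℝ)) (hf : Measurable f) (hM : Measurable M)
    (b : Fin J → ℝ)
    (μ ν : Measure (Fin n → ℝ)) [IsFiniteMeasure μ] [IsFiniteMeasure ν] :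
    dmeas (Pmeas πprior πnoise f M b μ) (Pmeas πprior πnoise f M b ν) ≤
      κ⁻¹ * dmeas μ ν := by
  have hκinv : (0:ℝ) < κ⁻¹ := inv_pos.2 hκ0
  have hg0 : ∀ ε, 0 ≤ πnoise ε := fun ε => le_trans hκ0.le (hnoise_bnd ε).1
  -- the set defining dmeas μ ν
  set S : Set ℝ := {r : ℝ | ∃ φ : (Fin n → ℝ) → ℝ, Measurable φ ∧ (∀ x, |φ x| ≤ 1) ∧
    r = |(∫ x, φ x ∂μ) - ∫ x, φ x ∂ν|} with hS
  have hSbdd : BddAbove S := by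
    refine ⟨(μ Set.univ).toReal + (ν Set.univ).toReal, fun r hr => ?_⟩
    obtain ⟨φ, hφm, hφb, rfl⟩ := hr
    have h1 : ‖∫ x, φ x ∂μ‖ ≤ 1 * (μ Set.univ).toReal :=
      norm_integral_le_of_norm_le_const (ae_of_all _ fun x => by simpa using hφb x)
    have h2 : ‖∫ x, φ x ∂ν‖ ≤ 1 * (ν Set.univ).toReal :=
      norm_integral_le_of_norm_le_const (ae_of_all _ fun x => by simpa using hφb x)
    calc |(∫ x, φ x ∂μ) - ∫ x, φ x ∂ν| ≤ |∫ x, φ x ∂μ| + |∫ x, φ x ∂ν| := abs_sub _ _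
      _ ≤ (μ Set.univ).toReal + (ν Set.univ).toReal := by
          rw [Real.norm_eq_abs, one_mul] at h1 h2; linarith
  have hS0 : (0:ℝ) ∈ S := ⟨0, measurable_const, fun x => by simp, by simp⟩
  have hd0 : 0 ≤ dmeas μ ν := le_csSup hSbdd hS0
  refine Real.sSup_le ?_ (by positivity)
  rintro r ⟨φ, hφm, hφb, rfl⟩
  -- rewrite both P-integrals
  rw [Pmeas_integral hκ0 πprior hprior_meas hprior_nonneg hprior_int πnoise hnoise_meas
    hnoise_bnd f M hf hM b μ φ hφm hφb,
    Pmeas_integral hκ0 πprior hprior_meas hprior_nonneg hprior_int πnoise hnoise_meas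
    hnoise_bnd f M hf hM b ν φ hφm hφb]
  set ψ : (Fin n → ℝ) → ℝ :=
    fun z => ∫ u, φ u * (πnoise (b - f u - M z) * πprior u) with hψ
  have hGmeas : Measurable (fun p : ((Fin n → ℝ) × (Fin n → ℝ)) =>
      φ p.1 * (πnoise (b - f p.1 - M p.2) * πprior p.1)) :=
    (hφm.comp measurable_fst).mul ((hnoise_meas.comp
      ((measurable_const.sub (hf.comp measurable_fst)).sub
        (hM.comp measurable_snd))).mul (hprior_meas.comp measurable_fst))
  have hψm : Measurable ψ :=
    (hGmeas.stronglyMeasurable.integral_prod_left').measurable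
  -- πprior facts
  have hprior_integrable : Integrable πprior (volume : Measure (Fin n → ℝ)) := by
    refine ⟨hprior_meas.aestronglyMeasurable, ?_⟩
    rw [hasFiniteIntegral_iff_ofReal (ae_of_all _ hprior_nonneg), hprior_int]
    exact ENNReal.one_lt_top
  have hprior_intval : ∫ u, πprior u = 1 := by
    rw [integral_eq_lintegral_of_nonneg_ae (ae_of_all _ hprior_nonneg)
      hprior_meas.aestronglyMeasurable, hprior_int]
    simp
  -- bound on ψ
  have hψb : ∀ z, |ψ z| ≤ κ⁻¹ := by
    intro z
    have hdom : ∀ u, ‖φ u * (πnoise (b - f u - M z) * πprior u)‖ ≤ κ⁻¹ * πprior u := by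
      intro u
      have h1 : |φ u| ≤ 1 := hφb u
      have h2 : 0 ≤ πnoise (b - f u - M z) := hg0 _
      have h3 : πnoise (b - f u - M z) ≤ κ⁻¹ := (hnoise_bnd _).2
      have h4 : 0 ≤ πprior u := hprior_nonneg u
      rw [Real.norm_eq_abs, abs_mul]
      calc |φ u| * |πnoise (b - f u - M z) * πprior u|
          ≤ 1 * |πnoise (b - f u - M z) * πprior u| :=
            mul_le_mul_of_nonneg_right h1 (abs_nonneg _)
        _ = πnoise (b - f u - M z) * πprior u := by
            rw [one_mul, abs_of_nonneg (mul_nonneg h2 h4)]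
        _ ≤ κ⁻¹ * πprior u := mul_le_mul_of_nonneg_right h3 h4
    have hdomi : Integrable (fun u => κ⁻¹ * πprior u) (volume : Measure (Fin n → ℝ)) :=
      hprior_integrable.const_mul _
    have hFzm : Measurable fun u => φ u * (πnoise (b - f u - M z) * πprior u) :=
      hφm.mul ((hnoise_meas.comp ((measurable_const.sub hf).sub measurable_const)).mul
        hprior_meas)
    have hint : Integrable (fun u => φ u * (πnoise (b - f u - M z) * πprior u))
        (volume : Measure (Fin n → ℝ)) :=
      hdomi.mono' hFzm.aestronglyMeasurable (ae_of_all _ hdom)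
    calc |ψ z| = ‖ψ z‖ := (Real.norm_eq_abs _).symm
      _ ≤ ∫ u, ‖φ u * (πnoise (b - f u - M z) * πprior u)‖ :=
          norm_integral_le_integral_norm _
      _ ≤ ∫ u, κ⁻¹ * πprior u := integral_mono hint.norm hdomi hdom
      _ = κ⁻¹ := by rw [integral_const_mul, hprior_intval, mul_one]
  -- the rescaled test function
  set χ : (Fin n → ℝ) → ℝ := fun z => κ * ψ z with hχ
  have hχm : Measurable χ := measurable_const.mul hψm
  have hχb : ∀ z, |χ z| ≤ 1 := by
    intro z
    rw [hχ, abs_mul, abs_of_nonneg hκ0.le]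
    calc κ * |ψ z| ≤ κ * κ⁻¹ := mul_le_mul_of_nonneg_left (hψb z) hκ0.le
      _ = 1 := mul_inv_cancel₀ hκ0.ne'
  have hmem : |(∫ z, χ z ∂μ) - ∫ z, χ z ∂ν| ∈ S := ⟨χ, hχm, hχb, rfl⟩
  have hle : |(∫ z, χ z ∂μ) - ∫ z, χ z ∂ν| ≤ dmeas μ ν := le_csSup hSbdd hmem
  have hkey : |(∫ z, ψ z ∂μ) - ∫ z, ψ z ∂ν|
      = κ⁻¹ * |(∫ z, χ z ∂μ) - ∫ z, χ z ∂ν| := by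
    have h1 : ∫ z, χ z ∂μ = κ * ∫ z, ψ z ∂μ := integral_const_mul _ _
    have h2 : ∫ z, χ z ∂ν = κ * ∫ z, ψ z ∂ν := integral_const_mul _ _
    rw [h1, h2, ← mul_sub, abs_mul, abs_of_nonneg hκ0.le, ← mul_assoc,
      inv_mul_cancel₀ hκ0.ne', one_mul]
  rw [hkey]
  exact mul_le_mul_of_nonneg_left hle hκinv.le
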